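/- Under consistency and the total-expectation identity, the (l,a)-CATE satisfies E(Y^a - Y^{a*} | A=a, L=l) = (E(Y | L=l) - E(Y^{a*} | L=l)) / P(A=a | L=l) when a ≠ a* are the two values of a binary treatment and P(A=a|L=l) > 0. -/
import Mathlib

/-- Identification of the (l,a)-CATE:
`E(Y^a - Y^{a*} | A=a, L=l) = (E(Y|L=l) - E(Y^{a*}|L=l)) / P(A=a|L=l)`. -/
theorem stmt_2 (EY_Aa EY_Aast EYast_Aast EYast_Aa EYast EY pa past : ℝ)
    (hpos : 0 < pa) (hsum : pa + past = 1)
    (hconsist : EY_Aast = EYast_Aast)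
    (htotYast : EYast = EYast_Aast * past + EYast_Aa * pa)
    (htotY : EY = EY_Aa * pa + EY_Aast * past) :
    EY_Aa - EYast_Aa = (EY - EYast) / pa := by
  field_simp
  subst hconsist htotY htotYast
  ring
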